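/- arXiv:1512.06770 — 6 statements merged into one kernel-verified Lean document; each statement's English description precedes it below -/
import Mathlib

section
/- Let G and H be groups equipped with a matched pair structure (▷, ◁). Then the set G × H with multiplication (g₁,h₁)(g₂,h₂) = (g₁(h₁ ▷ g₂), (h₁ ◁ g₂)h₂) is a group, with identity element (1_G, 1_H) and with the inverse of (g,h) given by (h⁻¹ ▷ g⁻¹, h⁻¹ ◁ g⁻¹). -/
/-- A matched pair structure on a pair of groups `G`, `H`:
a left action-like map `act = ▷ : H → G → G` and a right action-like map
`coact = ◁ : H → G → H` satisfying the matched pair compatibility conditions. -/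
structure MatchedPair (G H : Type*) [Group G] [Group H] where
  act : H → G → G
  coact : H → G → H
  act_mul : ∀ (h₁ h₂ : H) (g : G), act (h₁ * h₂) g = act h₁ (act h₂ g)
  act_one : ∀ g : G, act 1 g = g
  coact_mul : ∀ (h : H) (g₁ g₂ : G), coact h (g₁ * g₂) = coact (coact h g₁) g₂
  coact_one : ∀ h : H, coact h 1 = h
  act_compat : ∀ (h : H) (g₁ g₂ : G),
    act h (g₁ * g₂) = act h g₁ * act (coact h g₁) g₂
  coact_compat : ∀ (h₁ h₂ : H) (g : G),
    coact (h₁ * h₂) g = coact h₁ (act h₂ g) * coact h₂ g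

lemma mp_act_one' {G H : Type*} [Group G] [Group H] (mp : MatchedPair G H) (h : H) :
    mp.act h 1 = 1 := by
  have := mp.act_compat h 1 1
  rw [mul_one, mp.coact_one] at this
  nth_rewrite 1 [← mul_one (mp.act h 1)] at this
  exact (mul_left_cancel this).symm

lemma mp_coact_one' {G H : Type*} [Group G] [Group H] (mp : MatchedPair G H) (g : G) :
    mp.coact 1 g = 1 := by
  have := mp.coact_compat 1 1 g
  rw [mul_one, mp.act_one] at this
  nth_rewrite 1 [← mul_one (mp.coact 1 g)] at this
  exact (mul_left_cancel this).symm

/-- The set `G × H` with the matched pair multiplication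
`(g₁,h₁)(g₂,h₂) = (g₁(h₁ ▷ g₂), (h₁ ◁ g₂)h₂)` is a group with identity `(1,1)`
and inverse `(g,h)⁻¹ = (h⁻¹ ▷ g⁻¹, h⁻¹ ◁ g⁻¹)`. -/
theorem matchedPair_group (G H : Type*) [Group G] [Group H] (mp : MatchedPair G H) :
    let mul : G × H → G × H → G × H :=
      fun p q => (p.1 * mp.act p.2 q.1, mp.coact p.2 q.1 * q.2)
    let one : G × H := (1, 1)
    let inv : G × H → G × H := fun p => (mp.act p.2⁻¹ p.1⁻¹, mp.coact p.2⁻¹ p.1⁻¹)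
    (∀ a b c : G × H, mul (mul a b) c = mul a (mul b c)) ∧
    (∀ a : G × H, mul one a = a) ∧
    (∀ a : G × H, mul a one = a) ∧
    (∀ a : G × H, mul (inv a) a = one) ∧
    (∀ a : G × H, mul a (inv a) = one) := by
  intro mul one inv
  refine ⟨?_, ?_, ?_, ?_, ?_⟩
  · rintro ⟨g₁, h₁⟩ ⟨g₂, h₂⟩ ⟨g₃, h₃⟩
    simp only [mul, Prod.mk.injEq]
    constructor
    · rw [mp.act_compat, ← mp.act_mul, mul_assoc]
    · rw [mp.coact_compat, mp.coact_mul, mul_assoc]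
  · rintro ⟨g, h⟩
    simp [mul, one, mp.act_one, mp_coact_one']
  · rintro ⟨g, h⟩
    simp [mul, one, mp_act_one', mp.coact_one]
  · rintro ⟨g, h⟩
    simp only [mul, inv, one, Prod.mk.injEq]
    constructor
    · have := mp.act_compat h⁻¹ g⁻¹ g
      rw [inv_mul_cancel, mp_act_one'] at this
      exact this.symm
    · have := mp.coact_mul h⁻¹ g⁻¹ g
      rw [inv_mul_cancel, mp.coact_one] at this
      rw [← this, inv_mul_cancel]
  · rintro ⟨g, h⟩
    simp only [mul, inv, one, Prod.mk.injEq]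
    constructor
    · rw [← mp.act_mul, mul_inv_cancel, mp.act_one, mul_inv_cancel]
    · have := mp.coact_compat h h⁻¹ g⁻¹
      rw [mul_inv_cancel, mp_coact_one'] at this
      exact this.symm
end

section
/- Let 𝔤 and 𝔥 be Lie algebras over a field k equipped with a matched pair structure (▷, ◁). Then the bracket [(ξ₁,η₁),(ξ₂,η₂)] = ([ξ₁,ξ₂] + η₁ ▷ ξ₂ − η₂ ▷ ξ₁, [η₁,η₂] + η₁ ◁ ξ₂ − η₂ ◁ ξ₁) makes the product vector space 𝔤 × 𝔥 into a Lie algebra over k (the bracket is bilinear, alternating, and satisfies the Jacobi identity). -/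
/-- A matched pair structure on a pair of Lie algebras `𝔤 = L`, `𝔥 = L'` over a
field `k`: bilinear maps `act = ▷ : 𝔥 × 𝔤 → 𝔤` and `coact = ◁ : 𝔥 × 𝔤 → 𝔥`
satisfying the matched pair compatibility conditions. -/
structure LieMatchedPair (k L L' : Type*) [Field k]
    [LieRing L] [LieAlgebra k L] [LieRing L'] [LieAlgebra k L'] where
  act : L' →ₗ[k] L →ₗ[k] L
  coact : L' →ₗ[k] L →ₗ[k] L'
  act_bracket : ∀ (η₁ η₂ : L') (ξ : L),
    act ⁅η₁, η₂⁆ ξ = act η₁ (act η₂ ξ) - act η₂ (act η₁ ξ)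
  coact_bracket : ∀ (η : L') (ξ₁ ξ₂ : L),
    coact η ⁅ξ₁, ξ₂⁆ = coact (coact η ξ₁) ξ₂ - coact (coact η ξ₂) ξ₁
  act_compat : ∀ (η : L') (ξ₁ ξ₂ : L),
    act η ⁅ξ₁, ξ₂⁆ = ⁅act η ξ₁, ξ₂⁆ + ⁅ξ₁, act η ξ₂⁆
      + act (coact η ξ₁) ξ₂ - act (coact η ξ₂) ξ₁
  coact_compat : ∀ (η₁ η₂ : L') (ξ : L),
    coact ⁅η₁, η₂⁆ ξ = ⁅η₁, coact η₂ ξ⁆ + ⁅coact η₁ ξ, η₂⁆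
      + coact η₁ (act η₂ ξ) - coact η₂ (act η₁ ξ)

/-- The matched pair bracket
`[(ξ₁,η₁),(ξ₂,η₂)] = ([ξ₁,ξ₂] + η₁ ▷ ξ₂ − η₂ ▷ ξ₁, [η₁,η₂] + η₁ ◁ ξ₂ − η₂ ◁ ξ₁)`
makes `𝔤 × 𝔥` a Lie algebra over `k`: it is bilinear, alternating, and
satisfies the Jacobi identity. -/
theorem lieMatchedPair_bracket_is_lie_algebra (k L L' : Type*) [Field k]
    [LieRing L] [LieAlgebra k L] [LieRing L'] [LieAlgebra k L']
    (mp : LieMatchedPair k L L') :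
    let B : L × L' → L × L' → L × L' := fun p q =>
      (⁅p.1, q.1⁆ + mp.act p.2 q.1 - mp.act q.2 p.1,
       ⁅p.2, q.2⁆ + mp.coact p.2 q.1 - mp.coact q.2 p.1)
    -- bilinearity
    (∀ (a : k) (p q r : L × L'), B (a • p + q) r = a • B p r + B q r) ∧
    (∀ (a : k) (p q r : L × L'), B p (a • q + r) = a • B p q + B p r) ∧
    -- alternating
    (∀ p : L × L', B p p = 0) ∧
    -- Jacobi identity
    (∀ p q r : L × L', B p (B q r) + B q (B r p) + B r (B p q) = 0) := by
  intro B
  refine ⟨?_, ?_, ?_, ?_⟩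
  · rintro t ⟨x, a⟩ ⟨y, b⟩ ⟨z, c⟩
    simp only [B, Prod.smul_mk, Prod.mk_add_mk, Prod.fst, Prod.snd, Prod.mk.injEq,
      map_add, map_smul, LinearMap.add_apply, LinearMap.smul_apply,
      add_lie, smul_lie, smul_add, smul_sub]
    constructor <;> abel
  · rintro t ⟨x, a⟩ ⟨y, b⟩ ⟨z, c⟩
    simp only [B, Prod.smul_mk, Prod.mk_add_mk, Prod.fst, Prod.snd, Prod.mk.injEq,
      map_add, map_smul, LinearMap.add_apply, LinearMap.smul_apply,
      lie_add, lie_smul, smul_add, smul_sub]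
    constructor <;> abel
  · rintro ⟨x, a⟩
    simp only [B, Prod.fst, Prod.snd, lie_self, Prod.mk_eq_zero]
    constructor <;> abel
  · rintro ⟨x, a⟩ ⟨y, b⟩ ⟨z, c⟩
    simp only [B, Prod.mk_add_mk, Prod.fst, Prod.snd, Prod.mk_eq_zero,
      map_add, map_sub, LinearMap.add_apply, LinearMap.sub_apply,
      lie_add, lie_sub, mp.act_bracket, mp.coact_bracket, mp.act_compat, mp.coact_compat]
    constructor
    · rw [← lie_skew z (mp.act a y), ← lie_skew x (mp.act b z), ← lie_skew y (mp.act c x)]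
      rw [show ⁅z,⁅x,y⁆⁆ = -⁅x,⁅y,z⁆⁆ - ⁅y,⁅z,x⁆⁆ by
        rw [eq_sub_iff_add_eq, eq_neg_iff_add_eq_zero, ← lie_jacobi x y z]; abel]
      abel
    · rw [← lie_skew a (mp.coact c y), ← lie_skew b (mp.coact a z), ← lie_skew c (mp.coact b x)]
      rw [show ⁅c,⁅a,b⁆⁆ = -⁅a,⁅b,c⁆⁆ - ⁅b,⁅c,a⁆⁆ by
        rw [eq_sub_iff_add_eq, eq_neg_iff_add_eq_zero, ← lie_jacobi a b c]; abel]
      abel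
end

section
/- The map ψ : S → SL(2,ℂ) defined by ψ(a,b,c) = (1/√(1+c))·[[1+c, 0],[a+ib, 1]] is an injective group homomorphism from the group (S,*) into SL(2,ℂ): ψ(x * y) = ψ(x)·ψ(y) for all x,y ∈ S, and ψ(x) = ψ(y) implies x = y. Its image is exactly the set K of lower triangular matrices in SL(2,ℂ) whose (0,0)-entry is a positive real number. -/
open Matrix Complex

/-- The map `ψ(a,b,c) = (1/√(1+c)) • [[1+c, 0],[a+ib, 1]]` is an injective
group homomorphism from `(S, *)` into `SL(2,ℂ)`, whose image is exactly the
set of lower triangular matrices in `SL(2,ℂ)` with positive real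
`(0,0)`-entry. -/
theorem psi_injective_hom :
    let S : Set (ℝ × ℝ × ℝ) := {v | -1 < v.2.2}
    let mul : ℝ × ℝ × ℝ → ℝ × ℝ × ℝ → ℝ × ℝ × ℝ := fun v w => (1 + w.2.2) • v + w
    let ψ : ℝ × ℝ × ℝ → Matrix (Fin 2) (Fin 2) ℂ := fun v =>
      (((1 / Real.sqrt (1 + v.2.2) : ℝ) : ℂ)) •
        !![((1 + v.2.2 : ℝ) : ℂ), 0; (v.1 : ℂ) + (v.2.1 : ℂ) * I, 1]
    -- ψ maps into SL(2,ℂ)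
    (∀ v ∈ S, (ψ v).det = 1) ∧
    -- ψ is multiplicative
    (∀ v ∈ S, ∀ w ∈ S, ψ (mul v w) = ψ v * ψ w) ∧
    -- ψ is injective
    (∀ v ∈ S, ∀ w ∈ S, ψ v = ψ w → v = w) ∧
    -- the image of ψ is exactly K
    (∀ B : Matrix (Fin 2) (Fin 2) ℂ,
      (∃ v ∈ S, ψ v = B) ↔ (B 0 1 = 0 ∧ B.det = 1 ∧ ∃ r : ℝ, 0 < r ∧ B 0 0 = (r : ℂ))) := by
  intro S mul ψ
  have hmemS : ∀ v : ℝ × ℝ × ℝ, v ∈ S ↔ -1 < v.2.2 := fun v => Iff.rfl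
  -- Part 1: determinant
  have part1 : ∀ v ∈ S, (ψ v).det = 1 := by
    intro v hv
    have hv' : -1 < v.2.2 := (hmemS v).mp hv
    have hc : (0:ℝ) < 1 + v.2.2 := by linarith
    have hs : Real.sqrt (1 + v.2.2) ^ 2 = 1 + v.2.2 := Real.sq_sqrt hc.le
    have hs0 : Real.sqrt (1 + v.2.2) ≠ 0 := ne_of_gt (Real.sqrt_pos.mpr hc)
    show ((((1 / Real.sqrt (1 + v.2.2) : ℝ) : ℂ)) •
        !![((1 + v.2.2 : ℝ) : ℂ), 0; (v.1 : ℂ) + (v.2.1 : ℂ) * I, 1]).det = 1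
    rw [Matrix.det_smul, Matrix.det_fin_two_of]
    have h2 : ((1 + v.2.2 : ℝ) : ℂ) = ((Real.sqrt (1 + v.2.2) : ℝ) : ℂ)^2 := by
      exact_mod_cast hs.symm
    rw [h2]
    have hs0' : ((Real.sqrt (1 + v.2.2) : ℝ) : ℂ) ≠ 0 := by exact_mod_cast hs0
    simp only [Fintype.card_fin]; push_cast; field_simp; ring
  -- Part 2: multiplicativity
  have part2 : ∀ v ∈ S, ∀ w ∈ S, ψ (mul v w) = ψ v * ψ w := by
    intro v hv w hw
    have hv' : -1 < v.2.2 := (hmemS v).mp hv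
    have hw' : -1 < w.2.2 := (hmemS w).mp hw
    have hcv : (0:ℝ) < 1 + v.2.2 := by linarith
    have hcw : (0:ℝ) < 1 + w.2.2 := by linarith
    have hxv : ((Real.sqrt (1 + v.2.2) : ℝ) : ℂ) ≠ 0 := by
      exact_mod_cast (Real.sqrt_pos.mpr hcv).ne'
    have hxw : ((Real.sqrt (1 + w.2.2) : ℝ) : ℂ) ≠ 0 := by
      exact_mod_cast (Real.sqrt_pos.mpr hcw).ne'
    have hsqrtc : ((Real.sqrt (1 + w.2.2 + w.2.2 * v.2.2 + v.2.2) : ℝ) : ℂ)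
        = ((Real.sqrt (1 + v.2.2) : ℝ) : ℂ) * ((Real.sqrt (1 + w.2.2) : ℝ) : ℂ) := by
      rw [show (1:ℝ) + w.2.2 + w.2.2 * v.2.2 + v.2.2 = (1 + v.2.2) * (1 + w.2.2) by ring,
        Real.sqrt_mul hcv.le]
      push_cast; ring
    have h2c : ((Real.sqrt (1 + ((1 + w.2.2) * v.2.2 + w.2.2)) : ℝ) : ℂ)
        = ((Real.sqrt (1 + v.2.2) : ℝ) : ℂ) * ((Real.sqrt (1 + w.2.2) : ℝ) : ℂ) := by
      rw [show (1:ℝ) + ((1 + w.2.2) * v.2.2 + w.2.2) = (1 + v.2.2) * (1 + w.2.2) by ring,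
        Real.sqrt_mul hcv.le]
      push_cast; ring
    show ψ ((1 + w.2.2) • v + w) = ψ v * ψ w
    simp only [ψ]
    ext i j
    fin_cases i <;> fin_cases j <;>
      simp [Matrix.mul_apply, Fin.sum_univ_two, Prod.smul_def, smul_eq_mul, hsqrtc] <;>
      field_simp <;> rw [h2c] <;> field_simp <;> ring
  -- Part 3: injectivity
  have part3 : ∀ v ∈ S, ∀ w ∈ S, ψ v = ψ w → v = w := by
    intro v hv w hw h
    have hv' : -1 < v.2.2 := (hmemS v).mp hv
    have hw' : -1 < w.2.2 := (hmemS w).mp hw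
    have hcv : (0:ℝ) < 1 + v.2.2 := by linarith
    have hcw : (0:ℝ) < 1 + w.2.2 := by linarith
    have hsv := Real.sqrt_pos.mpr hcv
    have hsw := Real.sqrt_pos.mpr hcw
    replace h : (((1 / Real.sqrt (1 + v.2.2) : ℝ) : ℂ)) •
        !![((1 + v.2.2 : ℝ) : ℂ), 0; (v.1 : ℂ) + (v.2.1 : ℂ) * I, 1]
      = (((1 / Real.sqrt (1 + w.2.2) : ℝ) : ℂ)) •
        !![((1 + w.2.2 : ℝ) : ℂ), 0; (w.1 : ℂ) + (w.2.1 : ℂ) * I, 1] := h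
    have h11 := congrFun (congrFun h 1) 1
    simp [Matrix.smul_apply] at h11
    have hc : v.2.2 = w.2.2 := by
      field_simp at h11
      have h11' := congrArg (· ^ 2) h11
      simp only [Real.sq_sqrt hcv.le, Real.sq_sqrt hcw.le] at h11'
      linarith
    have h10 := congrFun (congrFun h 1) 0
    simp [Matrix.smul_apply, hc] at h10
    have hz : (v.1 : ℂ) + (v.2.1 : ℂ) * I = (w.1 : ℂ) + (w.2.1 : ℂ) * I := by
      have hne : ((Real.sqrt (1 + w.2.2) : ℝ) : ℂ) ≠ 0 := by exact_mod_cast hsw.ne'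
      field_simp at h10
      exact (h10.resolve_right (by linarith)).trans (by ring)
    have ha : v.1 = w.1 := by
      have := congrArg Complex.re hz; simpa using this
    have hb : v.2.1 = w.2.1 := by
      have := congrArg Complex.im hz; simpa using this
    exact Prod.ext ha (Prod.ext hb hc)
  refine ⟨part1, part2, part3, ?_⟩
  -- Part 4: image
  intro B
  constructor
  · rintro ⟨v, hv, rfl⟩
    have hv' : -1 < v.2.2 := (hmemS v).mp hv
    have hcv : (0:ℝ) < 1 + v.2.2 := by linarith
    refine ⟨?_, part1 v hv, Real.sqrt (1 + v.2.2), Real.sqrt_pos.mpr hcv, ?_⟩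
    · show ((((1 / Real.sqrt (1 + v.2.2) : ℝ) : ℂ)) •
        !![((1 + v.2.2 : ℝ) : ℂ), 0; (v.1 : ℂ) + (v.2.1 : ℂ) * I, 1]) 0 1 = 0
      simp
    · show ((((1 / Real.sqrt (1 + v.2.2) : ℝ) : ℂ)) •
        !![((1 + v.2.2 : ℝ) : ℂ), 0; (v.1 : ℂ) + (v.2.1 : ℂ) * I, 1]) 0 0 = _
      simp [Matrix.smul_apply]
      have hsq : ((Real.sqrt (1 + v.2.2) : ℝ) : ℂ)^2 = 1 + (v.2.2 : ℂ) := by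
        exact_mod_cast Real.sq_sqrt hcv.le
      have hne : ((Real.sqrt (1 + v.2.2) : ℝ) : ℂ) ≠ 0 := by
        exact_mod_cast (Real.sqrt_pos.mpr hcv).ne'
      rw [← hsq]
      field_simp
  · rintro ⟨h01, hdet, r, hr, h00⟩
    have hrne : ((r:ℝ) : ℂ) ≠ 0 := by exact_mod_cast hr.ne'
    have h11 : B 1 1 = ((r : ℂ))⁻¹ := by
      rw [Matrix.det_fin_two, h01, h00] at hdet
      field_simp at hdet ⊢
      linear_combination hdet
    have hr2 := pow_pos hr 2
    refine ⟨(r * (B 1 0).re, r * (B 1 0).im, r^2 - 1), by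
      show (-1:ℝ) < r^2 - 1; linarith, ?_⟩
    have hs' : Real.sqrt (r^2) = r := Real.sqrt_sq hr.le
    show (((1 / Real.sqrt (1 + (r^2 - 1)) : ℝ) : ℂ)) •
        !![((1 + (r^2 - 1) : ℝ) : ℂ), 0;
          ((r * (B 1 0).re : ℝ) : ℂ) + ((r * (B 1 0).im : ℝ) : ℂ) * I, 1] = B
    ext i j
    fin_cases i <;> fin_cases j
    · simp [Matrix.smul_apply, hs', h00]
      field_simp
    · simp [Matrix.smul_apply, h01]
    · simp [Matrix.smul_apply, hs']
      field_simp
      linear_combination Complex.re_add_im (B 1 0)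
    · simp [Matrix.smul_apply, hs', h11]
end

section
/- Define φ_K : ℝ³ → M₂(ℂ) by φ_K(a,b,c) = [[c/2, 0],[a+ib, −c/2]]. Then for all Y₁, Y₂ ∈ ℝ³, φ_K(k × (Y₁ × Y₂)) = φ_K(Y₁)·φ_K(Y₂) − φ_K(Y₂)·φ_K(Y₁); that is, φ_K is an (injective, real-linear) Lie algebra homomorphism from ℝ³ with the bracket [Y₁,Y₂] = k × (Y₁ × Y₂) into the 2×2 complex matrices with the commutator bracket. -/
open Matrix Complex

/-- The map `φ_K(a,b,c) = [[c/2, 0],[a+ib, -c/2]]` is an injective real-linear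
Lie algebra homomorphism from `ℝ³` with the bracket `[Y₁,Y₂] = k × (Y₁ × Y₂)`
into the `2×2` complex matrices with the commutator bracket. -/
theorem phiK_lie_hom :
    let cross : (Fin 3 → ℝ) → (Fin 3 → ℝ) → (Fin 3 → ℝ) := fun v w => crossProduct v w
    let kvec : Fin 3 → ℝ := ![0, 0, 1]
    let φK : (Fin 3 → ℝ) → Matrix (Fin 2) (Fin 2) ℂ := fun Y =>
      !![((Y 2 : ℝ) : ℂ) / 2, 0; (Y 0 : ℂ) + (Y 1 : ℂ) * I, -((Y 2 : ℝ) : ℂ) / 2]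
    -- Lie algebra homomorphism property
    (∀ Y₁ Y₂ : Fin 3 → ℝ,
      φK (cross kvec (cross Y₁ Y₂)) = φK Y₁ * φK Y₂ - φK Y₂ * φK Y₁) ∧
    -- injectivity
    Function.Injective φK ∧
    -- real-linearity
    (∀ Y₁ Y₂ : Fin 3 → ℝ, φK (Y₁ + Y₂) = φK Y₁ + φK Y₂) ∧
    (∀ (a : ℝ) (Y : Fin 3 → ℝ), φK (a • Y) = a • φK Y) := by
  intro cross kvec φK
  refine ⟨?_, ?_, ?_, ?_⟩
  · intro Y₁ Y₂
    simp only [cross, kvec, φK, crossProduct, LinearMap.mk₂_apply]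
    ext i j
    fin_cases i <;> fin_cases j <;>
      simp [Matrix.mul_apply, Fin.sum_univ_succ, Complex.ext_iff] <;> first | (constructor <;> ring) | ring | trivial
  · intro Y₁ Y₂ h
    simp only [φK] at h
    have h00 := congrFun (congrFun h 0) 0
    have h10 := congrFun (congrFun h 1) 0
    simp [Complex.ext_iff] at h00 h10
    funext i
    fin_cases i <;> simp [h10.1, h10.2] <;> linarith [h00]
  · intro Y₁ Y₂
    simp only [φK]
    ext i j
    fin_cases i <;> fin_cases j <;> simp [Complex.ext_iff] <;> ring
  · intro a Y
    simp only [φK]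
    ext i j
    fin_cases i <;> fin_cases j <;> simp [Complex.ext_iff] <;> ring
end

section
/- Let φ_su(r,s,t) = r·e₁ + s·e₂ + t·e₃ with e₁ = [[0, −i/2],[−i/2, 0]], e₂ = [[0, −1/2],[1/2, 0]], e₃ = [[−i/2, 0],[0, i/2]], and let φ_K(a,b,c) = [[c/2, 0],[a+ib, −c/2]]. Then for all X, Y ∈ ℝ³ the matrix commutator decomposes as φ_K(Y)·φ_su(X) − φ_su(X)·φ_K(Y) = φ_su(Y × (X × k)) + φ_K(Y × X); i.e. the 𝔰𝔲(2)-component of [φ_K(Y), φ_su(X)] corresponds to Y ▷ X = Y × (X × k) and the 𝔎-component corresponds to Y ◁ X = Y × X. -/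
open Matrix Complex

set_option maxHeartbeats 1000000 in
/-- The commutator of `φ_K(Y)` and `φ_su(X)` decomposes as
`[φ_K(Y), φ_su(X)] = φ_su(Y × (X × k)) + φ_K(Y × X)`, i.e. the `𝔰𝔲(2)`-component
of the commutator is `Y ▷ X = Y × (X × k)` and the `𝔎`-component is
`Y ◁ X = Y × X`. -/
theorem commutator_decomposition :
    let cross : (Fin 3 → ℝ) → (Fin 3 → ℝ) → (Fin 3 → ℝ) := fun v w => crossProduct v w
    let kvec : Fin 3 → ℝ := ![0, 0, 1]
    let e₁ : Matrix (Fin 2) (Fin 2) ℂ := !![0, -I/2; -I/2, 0]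
    let e₂ : Matrix (Fin 2) (Fin 2) ℂ := !![0, -(1:ℂ)/2; (1:ℂ)/2, 0]
    let e₃ : Matrix (Fin 2) (Fin 2) ℂ := !![-I/2, 0; 0, I/2]
    let φsu : (Fin 3 → ℝ) → Matrix (Fin 2) (Fin 2) ℂ := fun X =>
      X 0 • e₁ + X 1 • e₂ + X 2 • e₃
    let φK : (Fin 3 → ℝ) → Matrix (Fin 2) (Fin 2) ℂ := fun Y =>
      !![((Y 2 : ℝ) : ℂ) / 2, 0; (Y 0 : ℂ) + (Y 1 : ℂ) * I, -((Y 2 : ℝ) : ℂ) / 2]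
    ∀ X Y : Fin 3 → ℝ,
      φK Y * φsu X - φsu X * φK Y =
        φsu (cross Y (cross X kvec)) + φK (cross Y X) := by
  intro cross kvec e₁ e₂ e₃ φsu φK X Y
  simp only [cross, kvec, e₁, e₂, e₃, φsu, φK, crossProduct]
  ext i j
  fin_cases i <;> fin_cases j <;>
    simp [Matrix.mul_apply, Fin.sum_univ_succ, Complex.ext_iff] <;>
    exact ⟨by ring, by ring⟩
end

section
/- On ℝ³, define the brackets [X₁,X₂]_𝔤 = X₁ × X₂ and [Y₁,Y₂]_𝔥 = k × (Y₁ × Y₂), and the maps Y ▷ X = Y × (X × k) and Y ◁ X = Y × X. Then (▷, ◁) is a matched pair structure on ((ℝ³, ×), (ℝ³, k × (· × ·))): for all X, X₁, X₂, Y, Y₁, Y₂ ∈ ℝ³, (i) (k × (Y₁ × Y₂)) × (X × k) = Y₁ × ((Y₂ × (X × k)) × k) − Y₂ × ((Y₁ × (X × k)) × k); (ii) Y × (X₁ × X₂) = (Y × X₁) × X₂ − (Y × X₂) × X₁; (iii) Y × ((X₁ × X₂) × k) = (Y × (X₁ × k)) × X₂ + X₁ × (Y × (X₂ × k)) + (Y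 × X₁) × (X₂ × k) − (Y × X₂) × (X₁ × k); (iv) (k × (Y₁ × Y₂)) × X = k × (Y₁ × (Y₂ × X)) + k × ((Y₁ × X) × Y₂) + Y₁ × (Y₂ × (X × k)) − Y₂ × (Y₁ × (X × k)). -/
/-- The maps `Y ▷ X = Y × (X × k)` and `Y ◁ X = Y × X` form a matched pair
structure on the Lie algebras `(ℝ³, ×)` and `(ℝ³, k × (· × ·))`: the four
matched pair compatibility conditions (i)–(iv) hold. -/
theorem su2_K_matched_pair :
    let cross : (Fin 3 → ℝ) → (Fin 3 → ℝ) → (Fin 3 → ℝ) := fun v w => crossProduct v w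
    let kvec : Fin 3 → ℝ := ![0, 0, 1]
    -- (i) [Y₁,Y₂]_𝔥 ▷ X = Y₁ ▷ (Y₂ ▷ X) − Y₂ ▷ (Y₁ ▷ X)
    (∀ X Y₁ Y₂ : Fin 3 → ℝ,
      cross (cross kvec (cross Y₁ Y₂)) (cross X kvec) =
        cross Y₁ (cross (cross Y₂ (cross X kvec)) kvec)
          - cross Y₂ (cross (cross Y₁ (cross X kvec)) kvec)) ∧
    -- (ii) Y ◁ [X₁,X₂]_𝔤 = (Y ◁ X₁) ◁ X₂ − (Y ◁ X₂) ◁ X₁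
    (∀ X₁ X₂ Y : Fin 3 → ℝ,
      cross Y (cross X₁ X₂) =
        cross (cross Y X₁) X₂ - cross (cross Y X₂) X₁) ∧
    -- (iii) Y ▷ [X₁,X₂]_𝔤 = [Y ▷ X₁, X₂] + [X₁, Y ▷ X₂] + (Y ◁ X₁) ▷ X₂ − (Y ◁ X₂) ▷ X₁
    (∀ X₁ X₂ Y : Fin 3 → ℝ,
      cross Y (cross (cross X₁ X₂) kvec) =
        cross (cross Y (cross X₁ kvec)) X₂
          + cross X₁ (cross Y (cross X₂ kvec))
          + cross (cross Y X₁) (cross X₂ kvec)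
          - cross (cross Y X₂) (cross X₁ kvec)) ∧
    -- (iv) [Y₁,Y₂]_𝔥 ◁ X = [Y₁, Y₂ ◁ X] + [Y₁ ◁ X, Y₂] + Y₁ ◁ (Y₂ ▷ X) − Y₂ ◁ (Y₁ ▷ X)
    (∀ X Y₁ Y₂ : Fin 3 → ℝ,
      cross (cross kvec (cross Y₁ Y₂)) X =
        cross kvec (cross Y₁ (cross Y₂ X))
          + cross kvec (cross (cross Y₁ X) Y₂)
          + cross Y₁ (cross Y₂ (cross X kvec))
          - cross Y₂ (cross Y₁ (cross X kvec))) := by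
  refine ⟨?_, ?_, ?_, ?_⟩ <;>
  · intro A B C
    funext i
    fin_cases i <;>
      simp [crossProduct, Matrix.cons_val_zero, Matrix.cons_val_one] <;> ring
end
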